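/- arXiv:1207.4242 — 5 statements merged into one kernel-verified Lean document; each statement's English description precedes it below -/
import Mathlib

section
/- Let γ > 1, μ = (1-1/γ)², and f(z) = -μ z + log z - (1/γ²) log(z - 1). For z = 1 + R e^{-iθ} with R > 0 and θ ∈ (0, π), the derivative of Re(f(z)) with respect to θ equals [R sin θ / (1 + R² + 2R cos θ)] · [μ(1 + R² + 2R cos θ) - 1], and if R < 1/√μ - 1 then this derivative is negative for all θ ∈ (0, π). -/
theorem deriv_re_f_on_arc (γ : ℝ) (hγ : 1 < γ)
    (μ : ℝ) (hμ : μ = (1 - 1/γ)^2)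
    (f : ℂ → ℂ)
    (hf : ∀ z : ℂ, f z = -(μ:ℂ) * z + Complex.log z
        - (1/(γ:ℂ)^2) * Complex.log (z - 1))
    (R : ℝ) (hR : 0 < R)
    (θ : ℝ) (hθ0 : 0 < θ) (hθπ : θ < Real.pi) :
    deriv (fun s : ℝ => (f (1 + (R:ℂ) * Complex.exp (-(s:ℂ) * Complex.I))).re) θ
      = (R * Real.sin θ / (1 + R^2 + 2*R*Real.cos θ)) *
          (μ * (1 + R^2 + 2*R*Real.cos θ) - 1) ∧
    (R < 1 / Real.sqrt μ - 1 →
      deriv (fun s : ℝ =>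
        (f (1 + (R:ℂ) * Complex.exp (-(s:ℂ) * Complex.I))).re) θ < 0) := by
  have hAθ : 0 < 1 + R^2 + 2*R*Real.cos θ := by
    have h1 : Real.cos Real.pi < Real.cos θ :=
      Real.cos_lt_cos_of_nonneg_of_le_pi (le_of_lt hθ0) le_rfl hθπ
    rw [Real.cos_pi] at h1
    nlinarith [sq_nonneg (1 - R), mul_pos hR (show (0:ℝ) < 1 + Real.cos θ by linarith)]
  have hkey : (fun s : ℝ => (f (1 + (R:ℂ) * Complex.exp (-(s:ℂ) * Complex.I))).re)
      = fun s : ℝ => -μ * (1 + R * Real.cos s)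
          + Real.log (1 + R^2 + 2*R*Real.cos s) / 2 - (1/γ^2) * Real.log R := by
    funext s
    rw [hf]
    set z : ℂ := 1 + (R:ℂ) * Complex.exp (-(s:ℂ) * Complex.I) with hz
    have hAnn : 0 ≤ 1 + R^2 + 2*R*Real.cos s := by
      nlinarith [Real.sin_sq_add_cos_sq s, sq_nonneg (1 + R * Real.cos s), sq_nonneg (R * Real.sin s)]
    have habs : ‖z‖ = Real.sqrt (1 + R^2 + 2*R*Real.cos s) := by
      rw [hz, Complex.norm_def, Complex.normSq_apply]
      simp [Complex.exp_re, Complex.exp_im]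
      congr 1
      nlinarith [Real.sin_sq_add_cos_sq s]
    have habs2 : ‖z - 1‖ = R := by
      rw [hz]; simp [Complex.norm_exp, abs_of_pos hR]
    have h1 : (-(μ:ℂ) * z).re = -μ * (1 + R * Real.cos s) := by
      rw [hz]; simp [Complex.mul_re, Complex.exp_re, Complex.exp_im]
    have h2 : (Complex.log z).re = Real.log (1 + R^2 + 2*R*Real.cos s) / 2 := by
      rw [Complex.log_re, habs, Real.log_sqrt hAnn]
    have h3 : ((1/(γ:ℂ)^2) * Complex.log (z - 1)).re = (1/γ^2) * Real.log R := by
      have hrw : (1/(γ:ℂ)^2) = ((1/γ^2 : ℝ) : ℂ) := by push_cast; ring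
      rw [hrw, Complex.re_ofReal_mul, Complex.log_re, habs2]
    rw [Complex.sub_re, Complex.add_re, h1, h2, h3]
  rw [hkey]
  have hd : HasDerivAt (fun s : ℝ => -μ * (1 + R * Real.cos s)
      + Real.log (1 + R^2 + 2*R*Real.cos s) / 2 - (1/γ^2) * Real.log R)
      (-μ * (R * -Real.sin θ) + (2*R*(-Real.sin θ)) / (1 + R^2 + 2*R*Real.cos θ) / 2) θ := by
    have hc : HasDerivAt (fun s : ℝ => 1 + R^2 + 2*R*Real.cos s) (2*R*(-Real.sin θ)) θ := by
      have := ((Real.hasDerivAt_cos θ).const_mul (2*R)).const_add (1 + R^2)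
      simpa using this
    have hlog := hc.log (ne_of_gt hAθ)
    have hcos := ((Real.hasDerivAt_cos θ).const_mul R).const_add 1
    exact ((hcos.const_mul (-μ)).add (hlog.div_const 2)).sub_const ((1/γ^2) * Real.log R)
  have hsin : 0 < Real.sin θ := Real.sin_pos_of_pos_of_lt_pi hθ0 hθπ
  have heq : -μ * (R * -Real.sin θ) + (2*R*(-Real.sin θ)) / (1 + R^2 + 2*R*Real.cos θ) / 2
      = (R * Real.sin θ / (1 + R^2 + 2*R*Real.cos θ)) *
          (μ * (1 + R^2 + 2*R*Real.cos θ) - 1) := by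
    have hne := ne_of_gt hAθ
    have hA1 : (1 + R^2 + 2*R*Real.cos θ) * (1 + R^2 + 2*R*Real.cos θ)⁻¹ = 1 := mul_inv_cancel₀ hne
    simp only [div_eq_mul_inv]
    linear_combination (-μ * R * Real.sin θ) * hA1
  rw [hd.deriv, heq]
  refine ⟨rfl, fun hRlt => ?_⟩
  have h1γ : 1/γ < 1 := by rw [div_lt_one (by linarith)]; linarith
  have hμ0 : 0 < μ := hμ ▸ pow_pos (by linarith) 2
  have hs : 0 < Real.sqrt μ := Real.sqrt_pos.mpr hμ0
  have h5 : Real.sqrt μ * (R + 1) < 1 := by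
    have : R + 1 < 1 / Real.sqrt μ := by linarith
    calc Real.sqrt μ * (R + 1) < Real.sqrt μ * (1 / Real.sqrt μ) := by
          exact mul_lt_mul_of_pos_left this hs
      _ = 1 := by field_simp
  have h6 : μ * (R + 1)^2 < 1 := by
    have := Real.sq_sqrt (le_of_lt hμ0)
    nlinarith [mul_pos hs (show (0:ℝ) < R + 1 by linarith)]
  have h7 : μ * (1 + R^2 + 2*R*Real.cos θ) - 1 < 0 := by
    have hc1 : Real.cos θ ≤ 1 := Real.cos_le_one θ
    nlinarith
  exact mul_neg_of_pos_of_neg (div_pos (mul_pos hR hsin) hAθ) h7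
end

section
/- Let γ > 1, p = γ/(γ-1), μ = (1-1/γ)², and f(z) = -μ z + log z - (1/γ²) log(z-1). For ω = p + t e^{iπ/3} with 0 ≤ t ≤ 1, the derivative of Re(f(ω)) with respect to t equals - t² (t² - (2p-1)t - 2p² + 2p) / (2p² (t² + pt + p²)(t² + (p-1)t + (p-1)²)), and this is nonnegative for t ∈ [0,1]; hence Re(f) is increasing along this ray. -/
set_option maxHeartbeats 1000000

theorem deriv_re_f_on_Sigma1 (γ : ℝ) (hγ : 1 < γ)
    (p μ : ℝ) (hp : p = γ / (γ - 1)) (hμ : μ = (1 - 1/γ)^2)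
    (f : ℂ → ℂ)
    (hf : ∀ z : ℂ, f z = -(μ:ℂ) * z + Complex.log z
        - (1/(γ:ℂ)^2) * Complex.log (z - 1))
    (t : ℝ) (ht0 : 0 ≤ t) (ht1 : t ≤ 1) :
    deriv (fun s : ℝ =>
        (f ((p:ℂ) + (s:ℂ) * Complex.exp (Real.pi * Complex.I / 3))).re) t
      = -(t^2 * (t^2 - (2*p - 1)*t - 2*p^2 + 2*p)) /
          (2 * p^2 * (t^2 + p*t + p^2) * (t^2 + (p - 1)*t + (p - 1)^2)) ∧
    0 ≤ deriv (fun s : ℝ =>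
        (f ((p:ℂ) + (s:ℂ) * Complex.exp (Real.pi * Complex.I / 3))).re) t := by
  have hγ0 : γ ≠ 0 := by linarith
  have hγ1 : γ - 1 ≠ 0 := by linarith
  have hp1 : 1 < p := by
    rw [hp, lt_div_iff₀ (by linarith : (0:ℝ) < γ - 1)]; linarith
  have hp0 : p ≠ 0 := by linarith
  have hinv : 1/γ = (p - 1)/p := by
    rw [hp]; field_simp; ring
  have hμ' : μ = 1/p^2 := by
    rw [hμ, hinv]; field_simp; ring
  have hc : 1/γ^2 = (p-1)^2/p^2 := by
    rw [show (1:ℝ)/γ^2 = (1/γ)^2 by ring, hinv]; ring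
  have hE : Complex.exp (Real.pi * Complex.I / 3)
      = Complex.ofReal (1/2) + Complex.ofReal (Real.sqrt 3 / 2) * Complex.I := by
    rw [show (↑Real.pi * Complex.I / 3 : ℂ) = ((Real.pi/3 : ℝ) : ℂ) * Complex.I by
      push_cast; ring, Complex.exp_mul_I, ← Complex.ofReal_cos, ← Complex.ofReal_sin,
      Real.cos_pi_div_three, Real.sin_pi_div_three]
  have h3 : Real.sqrt 3 ^ 2 = 3 := Real.sq_sqrt (by norm_num)
  -- the function in real form
  set g : ℝ → ℝ := fun s => -μ*(p+s/2) + (1/2)*Real.log (s^2+p*s+p^2)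
      - ((p-1)^2/(2*p^2))*Real.log (s^2+(p-1)*s+(p-1)^2) with hg
  have hfg : (fun s : ℝ =>
        (f ((p:ℂ) + (s:ℂ) * Complex.exp (Real.pi * Complex.I / 3))).re) = g := by
    funext s
    rw [hf, hE, hg]
    have hω : (p:ℂ) + (s:ℂ) * (Complex.ofReal (1/2) + Complex.ofReal (Real.sqrt 3 / 2) * Complex.I)
        = Complex.ofReal (p + s/2) + Complex.ofReal (s * (Real.sqrt 3/2)) * Complex.I := by
      push_cast; ring
    rw [hω]
    have hre : (Complex.ofReal (p + s/2) + Complex.ofReal (s * (Real.sqrt 3/2)) * Complex.I).re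
        = p + s/2 := by simp
    have hsub : Complex.ofReal (p + s/2) + Complex.ofReal (s * (Real.sqrt 3/2)) * Complex.I - 1
        = Complex.ofReal (p + s/2 - 1) + Complex.ofReal (s * (Real.sqrt 3/2)) * Complex.I := by
      push_cast; ring
    have hns1 : Complex.normSq (Complex.ofReal (p + s/2) + Complex.ofReal (s * (Real.sqrt 3/2)) * Complex.I)
        = s^2+p*s+p^2 := by
      simp [Complex.normSq_apply]; nlinarith [h3]
    have hns2 : Complex.normSq (Complex.ofReal (p + s/2 - 1) + Complex.ofReal (s * (Real.sqrt 3/2)) * Complex.I)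
        = s^2+(p-1)*s+(p-1)^2 := by
      simp [Complex.normSq_apply]; nlinarith [h3]
    have hlog1 : (Complex.log (Complex.ofReal (p + s/2) + Complex.ofReal (s * (Real.sqrt 3/2)) * Complex.I)).re
        = (1/2) * Real.log (s^2+p*s+p^2) := by
      rw [Complex.log_re, Complex.norm_def, Real.log_sqrt (Complex.normSq_nonneg _), hns1]
      ring
    have hlog2 : (Complex.log (Complex.ofReal (p + s/2) + Complex.ofReal (s * (Real.sqrt 3/2)) * Complex.I - 1)).re
        = (1/2) * Real.log (s^2+(p-1)*s+(p-1)^2) := by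
      rw [hsub, Complex.log_re, Complex.norm_def, Real.log_sqrt (Complex.normSq_nonneg _), hns2]
      ring
    have hcoef : (1/(γ:ℂ)^2) = Complex.ofReal (1/γ^2) := by push_cast; ring
    rw [Complex.sub_re, Complex.add_re, hcoef, Complex.re_ofReal_mul, hlog1, hlog2]
    rw [show (-(μ:ℂ) * (Complex.ofReal (p + s/2) + Complex.ofReal (s * (Real.sqrt 3/2)) * Complex.I)).re
        = -μ * (p + s/2) by simp, hc]
    ring
  rw [hfg]
  have hQ1 : (0:ℝ) < t^2+p*t+p^2 := by nlinarith
  have hQ2 : (0:ℝ) < t^2+(p-1)*t+(p-1)^2 := by nlinarith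
  have hA : HasDerivAt (fun s:ℝ => -μ*(p+s/2)) (-μ*(1/2)) t := by
    simpa using (((hasDerivAt_id t).div_const 2).const_add p).const_mul (-μ)
  have hB : HasDerivAt (fun s:ℝ => s^2+p*s+p^2) (2*t+p) t := by
    have := (((hasDerivAt_pow 2 t).add ((hasDerivAt_id t).const_mul p)).add_const (p^2))
    simpa using this.congr_deriv (by ring)
  have hC : HasDerivAt (fun s:ℝ => s^2+(p-1)*s+(p-1)^2) (2*t+(p-1)) t := by
    have := (((hasDerivAt_pow 2 t).add ((hasDerivAt_id t).const_mul (p-1))).add_const ((p-1)^2))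
    simpa using this.congr_deriv (by ring)
  have hD : HasDerivAt g
      (-μ*(1/2) + (1/2)*((2*t+p)/(t^2+p*t+p^2))
        - ((p-1)^2/(2*p^2))*((2*t+(p-1))/(t^2+(p-1)*t+(p-1)^2))) t := by
    exact (hA.add ((hB.log hQ1.ne').const_mul (1/2))).sub
      ((hC.log hQ2.ne').const_mul ((p-1)^2/(2*p^2)))
  have hEq : -μ*(1/2) + (1/2)*((2*t+p)/(t^2+p*t+p^2))
        - ((p-1)^2/(2*p^2))*((2*t+(p-1))/(t^2+(p-1)*t+(p-1)^2))
      = -(t^2 * (t^2 - (2*p - 1)*t - 2*p^2 + 2*p)) /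
          (2 * p^2 * (t^2 + p*t + p^2) * (t^2 + (p - 1)*t + (p - 1)^2)) := by
    rw [hμ']
    rw [eq_div_iff (by positivity)]
    have k0 : 1/p^2 * p^2 = 1 := by field_simp
    have k1 : (2*t+p)/(t^2+p*t+p^2) * (t^2+p*t+p^2) = 2*t+p := div_mul_cancel₀ _ hQ1.ne'
    have k2 : (2*t+(p-1))/(t^2+(p-1)*t+(p-1)^2) * (t^2+(p-1)*t+(p-1)^2) = 2*t+(p-1) := div_mul_cancel₀ _ hQ2.ne'
    linear_combination (-(t^2+p*t+p^2)*(t^2+(p-1)*t+(p-1)^2) - (p-1)^2*(t^2+p*t+p^2)*((2*t+(p-1))/(t^2+(p-1)*t+(p-1)^2) * (t^2+(p-1)*t+(p-1)^2))) * k0 + p^2*(t^2+(p-1)*t+(p-1)^2) * k1 - (p-1)^2*(t^2+p*t+p^2) * k2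
  refine ⟨by rw [hD.deriv, hEq], ?_⟩
  rw [hD.deriv, hEq]
  apply div_nonneg
  · nlinarith [mul_nonneg (mul_nonneg (mul_nonneg ht0 ht0) ht0) (by linarith : (0:ℝ) ≤ 2*p-1-t),
      mul_nonneg (sq_nonneg t) (by nlinarith : (0:ℝ) ≤ 2*p^2-2*p)]
  · positivity
end

section
/- Let γ > 1, p = γ/(γ-1), μ = (1-1/γ)², and f(z) = -μ z + log z - (1/γ²) log(z-1). For ω = p + 1/2 + it with t ≥ √3/2, the derivative of Re(f(ω)) with respect to t equals t[(2p-1)t² + p(p-1) + (2p-1)/4] / (p² [t² + (p+1/2)²][t² + (p-1/2)²]), which is strictly positive; moreover there exists a constant C > 0 (depending only on γ) such that this derivative is at least C/t for all t ≥ √3/2; consequently Re(f(p+1/2+it)) - Re(f(p+1/2+i√3/2)) ≥ C log(t/(√3/2)) for all t ≥ √3/2. -/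
private lemma logre_aux (x y : ℝ) :
    (Complex.log ((x:ℂ) + (y:ℂ)*Complex.I)).re = Real.log (x^2+y^2) / 2 := by
  rw [Complex.log_re, Complex.norm_def, Complex.normSq_apply]
  simp only [Complex.add_re, Complex.ofReal_re, Complex.mul_re, Complex.I_re, Complex.I_im,
    Complex.ofReal_im, Complex.add_im, Complex.mul_im]
  rw [show (x + (y * 0 - 0 * 1)) * (x + (y * 0 - 0 * 1)) + (0 + (y * 1 + 0 * 0)) * (0 + (y * 1 + 0 * 0)) = x^2 + y^2 by ring, Real.log_sqrt (by positivity)]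

private lemma poly_aux (A B u m : ℝ) (hA : 0 ≤ A) (hB : 0 ≤ B) (hm : 0 ≤ m) (hu : m ≤ u) :
    m^2*((u+A)*(u+B)) ≤ u^2*((m+A)*(m+B)) := by
  have hu0 : 0 ≤ u := hm.trans hu
  nlinarith [mul_nonneg (mul_nonneg (mul_nonneg hm hu0) (add_nonneg hA hB)) (sub_nonneg.mpr hu),
    mul_nonneg (mul_nonneg (mul_nonneg hA hB) (sub_nonneg.mpr hu)) (add_nonneg hu0 hm)]

private lemma frac_aux1 (k t A B : ℝ) (hA : A ≠ 0) (hB : B ≠ 0) :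
    2*t/A/2 - k*(2*t/B/2) = (t*B - k*(t*A))/(A*B) := by
  field_simp

private lemma frac_aux2 (p t : ℝ) (hp0 : 0 < p) (hB : 0 < (p-1/2)^2) :
    t * ((2*p - 1)*t^2 + p*(p - 1) + (2*p - 1)/4) /
      (p^2 * (t^2 + (p + 1/2)^2) * (t^2 + (p - 1/2)^2))
    = (t*((p-1/2)^2+t^2) - (p-1)^2/p^2*(t*((p+1/2)^2+t^2)))/(((p+1/2)^2+t^2)*((p-1/2)^2+t^2)) := by
  have h1 : 0 < (p+1/2)^2 + t^2 := by positivity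
  have h2 : 0 < (p-1/2)^2 + t^2 := by positivity
  rw [div_eq_div_iff (by positivity) (by positivity)]
  field_simp
  ring

private lemma Cd_aux (q K P A B m u : ℝ) (hq : 0 ≤ q) (hK : 0 ≤ K) (hP : 0 ≤ P)
    (hA : 0 ≤ A) (hB : 0 ≤ B) (hm : 0 ≤ m) (hu : m ≤ u) :
    q*m^2*(P*((u+A)*(u+B))) ≤ u*(q*u+K)*(P*((m+A)*(m+B))) := by
  have h1 := poly_aux A B u m hA hB hm hu
  have hu0 : 0 ≤ u := hm.trans hu
  have h2 : q*(m^2*((u+A)*(u+B))) ≤ q*(u^2*((m+A)*(m+B))) := mul_le_mul_of_nonneg_left h1 hq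
  have h3 : q*(u^2*((m+A)*(m+B))) ≤ u*(q*u+K)*((m+A)*(m+B)) := by
    have hmm : 0 ≤ (m+A)*(m+B) := by positivity
    nlinarith [mul_nonneg (mul_nonneg hu0 hK) hmm]
  have h4 : P * (q*(m^2*((u+A)*(u+B)))) ≤ P * (u*(q*u+K)*((m+A)*(m+B))) :=
    mul_le_mul_of_nonneg_left (h2.trans h3) hP
  nlinarith [h4]

set_option maxHeartbeats 1600000 in
theorem deriv_re_f_on_Sigma2 (γ : ℝ) (hγ : 1 < γ)
    (p μ : ℝ) (hp : p = γ / (γ - 1)) (hμ : μ = (1 - 1/γ)^2)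
    (f : ℂ → ℂ)
    (hf : ∀ z : ℂ, f z = -(μ:ℂ) * z + Complex.log z
        - (1/(γ:ℂ)^2) * Complex.log (z - 1)) :
    (∀ t : ℝ, Real.sqrt 3 / 2 ≤ t →
      deriv (fun s : ℝ => (f ((p:ℂ) + 1/2 + (s:ℂ) * Complex.I)).re) t
        = t * ((2*p - 1)*t^2 + p*(p - 1) + (2*p - 1)/4) /
            (p^2 * (t^2 + (p + 1/2)^2) * (t^2 + (p - 1/2)^2)) ∧
      0 < deriv (fun s : ℝ => (f ((p:ℂ) + 1/2 + (s:ℂ) * Complex.I)).re) t) ∧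
    ∃ C : ℝ, 0 < C ∧
      (∀ t : ℝ, Real.sqrt 3 / 2 ≤ t →
        C / t ≤ deriv (fun s : ℝ => (f ((p:ℂ) + 1/2 + (s:ℂ) * Complex.I)).re) t) ∧
      (∀ t : ℝ, Real.sqrt 3 / 2 ≤ t →
        C * Real.log (t / (Real.sqrt 3 / 2)) ≤
          (f ((p:ℂ) + 1/2 + (t:ℂ) * Complex.I)).re
            - (f ((p:ℂ) + 1/2 + ((Real.sqrt 3 / 2 : ℝ):ℂ) * Complex.I)).re) := by
  have hγ1 : (0:ℝ) < γ - 1 := by linarith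
  have hγ0 : (0:ℝ) < γ := by linarith
  have hp1 : 1 < p := by
    rw [hp, lt_div_iff₀ hγ1]; linarith
  have hp0 : (0:ℝ) < p := by linarith
  have h0 : p*(γ-1) = γ := by rw [hp, div_mul_cancel₀ _ hγ1.ne']
  have hpγ : (p-1)*γ = p := by linear_combination h0
  have hk : 1/γ^2 = (p-1)^2/p^2 := by
    rw [div_eq_div_iff (by positivity) (by positivity)]
    linear_combination (-(p-1)*γ - p) * hpγ
  -- the real-variable formula for Re f on the line
  have hFeq : ∀ s : ℝ, (f ((p:ℂ) + 1/2 + (s:ℂ) * Complex.I)).re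
      = -μ*(p+1/2) + Real.log ((p+1/2)^2+s^2)/2 - (1/γ^2) * (Real.log ((p-1/2)^2+s^2)/2) := by
    intro s
    rw [hf]
    rw [show (p:ℂ)+1/2+(s:ℂ)*Complex.I = ((p+1/2:ℝ):ℂ) + ((s:ℝ):ℂ)*Complex.I by push_cast; ring]
    rw [show ((p+1/2:ℝ):ℂ) + ((s:ℝ):ℂ)*Complex.I - 1 = ((p-1/2:ℝ):ℂ) + ((s:ℝ):ℂ)*Complex.I by
      push_cast; ring]
    rw [Complex.sub_re, Complex.add_re, logre_aux]
    rw [show (1/(γ:ℂ)^2) = ((1/γ^2:ℝ):ℂ) by push_cast; ring, Complex.re_ofReal_mul]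
    rw [show -(μ:ℂ) = ((-μ:ℝ):ℂ) by push_cast; ring, Complex.re_ofReal_mul]
    rw [logre_aux]
    simp only [Complex.add_re, Complex.ofReal_re, Complex.mul_re, Complex.I_re, Complex.I_im,
      Complex.ofReal_im]
    ring
  have hA : (0:ℝ) < (p+1/2)^2 := by positivity
  have hB : (0:ℝ) < (p-1/2)^2 := by nlinarith
  have hF' : ∀ t : ℝ, HasDerivAt (fun s : ℝ => (f ((p:ℂ) + 1/2 + (s:ℂ) * Complex.I)).re)
      (t * ((2*p - 1)*t^2 + p*(p - 1) + (2*p - 1)/4) /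
        (p^2 * (t^2 + (p + 1/2)^2) * (t^2 + (p - 1/2)^2))) t := by
    intro t
    have hfun : (fun s : ℝ => (f ((p:ℂ) + 1/2 + (s:ℂ) * Complex.I)).re)
        = fun s : ℝ => -μ*(p+1/2) + Real.log ((p+1/2)^2+s^2)/2
            - (1/γ^2) * (Real.log ((p-1/2)^2+s^2)/2) := funext hFeq
    rw [hfun]
    have hsq : HasDerivAt (fun u:ℝ => u^2) (2*t) t := by
      simpa using hasDerivAt_pow 2 t
    have h1 : HasDerivAt (fun u:ℝ => (p+1/2)^2 + u^2) (2*t) t := hsq.const_add _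
    have h2 : HasDerivAt (fun u:ℝ => (p-1/2)^2 + u^2) (2*t) t := hsq.const_add _
    have e1 : (0:ℝ) < (p+1/2)^2 + t^2 := by positivity
    have e2 : (0:ℝ) < (p-1/2)^2 + t^2 := by positivity
    have h3 := (h1.log e1.ne').div_const 2
    have h4 := ((h2.log e2.ne').div_const 2).const_mul (1/γ^2)
    have h5 := (h3.const_add (-μ*(p+1/2))).sub h4
    refine h5.congr_deriv ?_
    symm
    rw [hk, frac_aux1 _ _ _ _ e1.ne' e2.ne']
    exact frac_aux2 p t hp0 hB
  have hderiv : ∀ t : ℝ, deriv (fun s : ℝ => (f ((p:ℂ) + 1/2 + (s:ℂ) * Complex.I)).re) t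
      = t * ((2*p - 1)*t^2 + p*(p - 1) + (2*p - 1)/4) /
        (p^2 * (t^2 + (p + 1/2)^2) * (t^2 + (p - 1/2)^2)) :=
    fun t => (hF' t).deriv
  have ht₀ : (0:ℝ) < Real.sqrt 3 / 2 := by positivity
  have ht₀2 : (Real.sqrt 3 / 2)^2 = 3/4 := by
    rw [div_pow, Real.sq_sqrt (by norm_num : (0:ℝ) ≤ 3)]; norm_num
  have hKpos : (0:ℝ) < p*(p - 1) + (2*p - 1)/4 := by nlinarith
  have hdpos : ∀ t : ℝ, Real.sqrt 3 / 2 ≤ t →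
      0 < t * ((2*p - 1)*t^2 + p*(p - 1) + (2*p - 1)/4) /
        (p^2 * (t^2 + (p + 1/2)^2) * (t^2 + (p - 1/2)^2)) := by
    intro t ht
    have ht0 : 0 < t := lt_of_lt_of_le ht₀ ht
    apply div_pos
    · apply mul_pos ht0; nlinarith
    · positivity
  refine ⟨fun t ht => ⟨hderiv t, by rw [hderiv]; exact hdpos t ht⟩, ?_⟩
  set C : ℝ := (2*p-1) * (3/4)^2 / (p^2 * (3/4+(p+1/2)^2) * (3/4+(p-1/2)^2)) with hC
  have hCpos : 0 < C := by
    apply div_pos (by nlinarith) (by positivity)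
  have hCd : ∀ t : ℝ, Real.sqrt 3 / 2 ≤ t →
      C / t ≤ t * ((2*p - 1)*t^2 + p*(p - 1) + (2*p - 1)/4) /
        (p^2 * (t^2 + (p + 1/2)^2) * (t^2 + (p - 1/2)^2)) := by
    intro t ht
    have ht0 : 0 < t := lt_of_lt_of_le ht₀ ht
    have ht2 : (3:ℝ)/4 ≤ t^2 := by
      rw [← ht₀2]; exact pow_le_pow_left₀ ht₀.le ht 2
    rw [div_le_div_iff₀ ht0 (by positivity), hC, div_mul_eq_mul_div,
      div_le_iff₀ (by positivity)]
    have hmain := Cd_aux (2*p-1) (p*(p - 1) + (2*p - 1)/4) (p^2) ((p+1/2)^2) ((p-1/2)^2)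
      (3/4) (t^2) (by linarith) hKpos.le (by positivity) hA.le hB.le (by norm_num) ht2
    nlinarith [hmain]
  refine ⟨C, hCpos, fun t ht => by rw [hderiv]; exact hCd t ht, ?_⟩
  intro t ht
  have ht0 : 0 < t := lt_of_lt_of_le ht₀ ht
  have hH' : ∀ x : ℝ, 0 < x →
      HasDerivAt (fun x : ℝ => (f ((p:ℂ) + 1/2 + (x:ℂ) * Complex.I)).re - C * Real.log x)
        (x * ((2*p - 1)*x^2 + p*(p - 1) + (2*p - 1)/4) /
          (p^2 * (x^2 + (p + 1/2)^2) * (x^2 + (p - 1/2)^2)) - C * x⁻¹) x := by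
    intro x hx
    exact (hF' x).sub ((Real.hasDerivAt_log hx.ne').const_mul C)
  have hmono : MonotoneOn (fun x : ℝ => (f ((p:ℂ) + 1/2 + (x:ℂ) * Complex.I)).re - C * Real.log x)
      (Set.Ici (Real.sqrt 3 / 2)) := by
    apply monotoneOn_of_deriv_nonneg (convex_Ici _)
    · intro x hx
      exact ((hH' x (lt_of_lt_of_le ht₀ hx)).continuousAt).continuousWithinAt
    · intro x hx
      rw [interior_Ici] at hx
      exact ((hH' x (lt_trans ht₀ hx)).differentiableAt).differentiableWithinAt
    · intro x hx
      rw [interior_Ici] at hx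
      have hx0 : 0 < x := lt_trans ht₀ hx
      rw [(hH' x hx0).deriv]
      have h6 := hCd x (le_of_lt hx)
      rw [div_eq_mul_inv] at h6
      linarith
  have hm : (f ((p:ℂ) + 1/2 + ((Real.sqrt 3 / 2 : ℝ):ℂ) * Complex.I)).re
        - C * Real.log (Real.sqrt 3 / 2)
      ≤ (f ((p:ℂ) + 1/2 + (t:ℂ) * Complex.I)).re - C * Real.log t :=
    hmono Set.self_mem_Ici (Set.mem_Ici.mpr ht) ht
  rw [Real.log_div ht0.ne' ht₀.ne', mul_sub]
  linarith
end

section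
/- Let γ > 1, p = γ/(γ-1), ν = (γ-1)^{4/3}/γ, f(z) = -(1-1/γ)² z + log z - (1/γ²) log(z-1), and C₀ = 1/4 + 4/(γ²(p-1)⁴). If 0 < δ < min{ν³/(6C₀), (p-1)/2}, then for all z with |z - p| < δ: |f(z) - f(p) - (f'''(p)/6)(z - p)³| ≤ C₀ |z - p|⁴ ≤ (ν³/6)|z - p|³. -/
open Complex Set

lemma bound_step {R M : ℝ} {p : ℂ} {h h' : ℂ → ℂ} (k : ℕ) (hM : 0 ≤ M)
    (hd : ∀ w : ℂ, ‖w - p‖ < R → HasDerivAt h (h' w) w)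
    (hb : ∀ w : ℂ, ‖w - p‖ < R → ‖h' w‖ ≤ M * ‖w - p‖ ^ k)
    (h0 : h p = 0) :
    ∀ w : ℂ, ‖w - p‖ < R → ‖h w‖ ≤ M / (k + 1) * ‖w - p‖ ^ (k + 1) := by
  intro z hz
  set r : ℝ := ‖z - p‖ with hr
  have hr0 : 0 ≤ r := norm_nonneg _
  set c : ℝ → ℂ := fun t => p + t • (z - p) with hc
  have hcd : ∀ t : ℝ, HasDerivAt c (z - p) t := by
    intro t
    simpa [hc] using ((hasDerivAt_id t).smul_const (z - p)).const_add p
  have hcnorm : ∀ t : ℝ, 0 ≤ t → ‖c t - p‖ = t * r := by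
    intro t ht
    rw [hc]
    simp only [add_sub_cancel_left, norm_smul, Real.norm_eq_abs, _root_.abs_of_nonneg ht, hr]
  have hmem : ∀ t ∈ Icc (0:ℝ) 1, ‖c t - p‖ < R := by
    intro t ht
    rw [hcnorm t ht.1]
    calc t * r ≤ 1 * r := by nlinarith [ht.2]
    _ < R := by simpa using hz
  set φ : ℝ → ℂ := fun t => h (c t) with hφ
  have hφd : ∀ t ∈ Icc (0:ℝ) 1, HasDerivAt φ ((z - p) • h' (c t)) t := by
    intro t ht
    have := HasDerivAt.scomp (𝕜 := ℝ) (𝕜' := ℂ) (h := c) (g₁ := h) (x := t)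
      (hd (c t) (hmem t ht)) (hcd t)
    simpa [hφ, Function.comp_def] using this
  set B : ℝ → ℝ := fun t => M * r ^ (k + 1) / (k + 1) * t ^ (k + 1) with hB
  set B' : ℝ → ℝ := fun t => M * r ^ (k + 1) * t ^ k with hB'
  have hBd : ∀ t : ℝ, HasDerivAt B (B' t) t := by
    intro t
    have := (hasDerivAt_pow (k+1) t).const_mul (M * r ^ (k + 1) / (k + 1))
    refine this.congr_deriv ?_
    have : ((k:ℝ) + 1) ≠ 0 := by positivity
    simp only [hB', Nat.add_sub_cancel]
    push_cast
    field_simp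
  have key : ∀ t ∈ Icc (0:ℝ) 1, ‖φ t‖ ≤ B t := by
    apply image_norm_le_of_norm_deriv_right_le_deriv_boundary
      (f' := fun t => (z - p) • h' (c t))
    · intro t ht
      exact (hφd t ht).continuousAt.continuousWithinAt
    · intro t ht
      exact (hφd t (Ico_subset_Icc_self ht)).hasDerivWithinAt
    · simp [hφ, hc, h0, hB]
    · exact hBd
    · intro t ht
      have h1 : ‖h' (c t)‖ ≤ M * ‖c t - p‖ ^ k := hb _ (hmem t (Ico_subset_Icc_self ht))
      rw [hcnorm t ht.1] at h1
      have : ‖(z - p) • h' (c t)‖ = r * ‖h' (c t)‖ := by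
        simp [norm_smul, hr]
      rw [this, hB']
      calc r * ‖h' (c t)‖ ≤ r * (M * (t * r) ^ k) := by
            apply mul_le_mul_of_nonneg_left h1 hr0
        _ = M * r ^ (k+1) * t ^ k := by ring
  have := key 1 (by norm_num)
  simp only [hφ, hc, one_smul, hB] at this
  calc ‖h z‖ = ‖h (p + (z - p))‖ := by ring_nf
    _ ≤ M * r ^ (k + 1) / (k + 1) * 1 ^ (k+1) := this
    _ = M / (k + 1) * ‖z - p‖ ^ (k + 1) := by rw [hr]; ring

lemma hdF1 (a b w : ℂ) (hw : w ∈ Complex.slitPlane) (hw1 : w - 1 ∈ Complex.slitPlane) :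
    HasDerivAt (fun z : ℂ => -a * z + Complex.log z - b * Complex.log (z - 1))
      (-a + w⁻¹ - b * (w - 1)⁻¹) w := by
  have h1 : HasDerivAt (fun z : ℂ => -a * z) (-a) w := by
    simpa using (hasDerivAt_id w).const_mul (-a)
  have h2 : HasDerivAt Complex.log w⁻¹ w := Complex.hasDerivAt_log hw
  have h3 : HasDerivAt (fun z : ℂ => Complex.log (z - 1)) ((w - 1)⁻¹) w := by
    have := (Complex.hasDerivAt_log hw1).comp w ((hasDerivAt_id w).sub_const 1)
    simpa [Function.comp_def] using this
  simpa using (h1.fun_add h2).fun_sub (h3.const_mul b)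

lemma hdF2 (a b w : ℂ) (hw : w ≠ 0) (hw1 : w - 1 ≠ 0) :
    HasDerivAt (fun z : ℂ => -a + z⁻¹ - b * (z - 1)⁻¹)
      (-(w ^ 2)⁻¹ + b * ((w - 1) ^ 2)⁻¹) w := by
  have h1 : HasDerivAt (fun z : ℂ => -a + z⁻¹) (-(w ^ 2)⁻¹) w :=
    (hasDerivAt_inv hw).const_add (-a)
  have h2 : HasDerivAt (fun z : ℂ => (z - 1)⁻¹) (-1 / (w - 1) ^ 2) w := by
    simpa using ((hasDerivAt_id w).sub_const 1).fun_inv hw1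
  have := h1.sub (h2.const_mul b)
  refine this.congr_deriv ?_
  field_simp
  ring

lemma hdF3 (b w : ℂ) (hw : w ≠ 0) (hw1 : w - 1 ≠ 0) :
    HasDerivAt (fun z : ℂ => -(z ^ 2)⁻¹ + b * ((z - 1) ^ 2)⁻¹)
      (2 * (w ^ 3)⁻¹ - 2 * b * ((w - 1) ^ 3)⁻¹) w := by
  have h1 : HasDerivAt (fun z : ℂ => (z ^ 2)⁻¹) (-(2 * w ^ 1) / (w ^ 2) ^ 2) w := by
    simpa using (hasDerivAt_pow 2 w).fun_inv (pow_ne_zero 2 hw)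
  have h2 : HasDerivAt (fun z : ℂ => ((z - 1) ^ 2)⁻¹)
      (-(2 * (w - 1) ^ 1 * 1) / ((w - 1) ^ 2) ^ 2) w := by
    simpa using (((hasDerivAt_id w).sub_const 1).fun_pow 2).fun_inv (pow_ne_zero 2 hw1)
  have := h1.neg.add (h2.const_mul b)
  refine this.congr_deriv ?_
  field_simp
  ring

lemma hdF4 (b w : ℂ) (hw : w ≠ 0) (hw1 : w - 1 ≠ 0) :
    HasDerivAt (fun z : ℂ => 2 * (z ^ 3)⁻¹ - 2 * b * ((z - 1) ^ 3)⁻¹)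
      (-6 * (w ^ 4)⁻¹ + 6 * b * ((w - 1) ^ 4)⁻¹) w := by
  have h1 : HasDerivAt (fun z : ℂ => (z ^ 3)⁻¹) (-(3 * w ^ 2) / (w ^ 3) ^ 2) w := by
    simpa using (hasDerivAt_pow 3 w).fun_inv (pow_ne_zero 3 hw)
  have h2 : HasDerivAt (fun z : ℂ => ((z - 1) ^ 3)⁻¹)
      (-(3 * (w - 1) ^ 2 * 1) / ((w - 1) ^ 3) ^ 2) w := by
    simpa using (((hasDerivAt_id w).sub_const 1).fun_pow 3).fun_inv (pow_ne_zero 3 hw1)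
  have := (h1.const_mul 2).sub (h2.const_mul (2 * b))
  refine this.congr_deriv ?_
  field_simp
  ring

set_option maxHeartbeats 1000000 in
theorem taylor_cubic_bound (γ : ℝ) (hγ : 1 < γ)
    (p ν C₀ : ℝ) (hp : p = γ/(γ-1)) (hν : ν = (γ - 1)^((4:ℝ)/3)/γ)
    (hC₀ : C₀ = 1/4 + 4/(γ^2 * (p - 1)^4))
    (f : ℂ → ℂ)
    (hf : ∀ z : ℂ, f z = -((1 - 1/γ)^2 : ℝ) * z + Complex.log z
        - (1/(γ:ℂ)^2) * Complex.log (z - 1))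
    (δ : ℝ) (hδ0 : 0 < δ) (hδ1 : δ < min (ν^3/(6*C₀)) ((p - 1)/2))
    (z : ℂ) (hz : ‖z - (p:ℂ)‖ < δ) :
    ‖f z - f (p:ℂ) - iteratedDeriv 3 f (p:ℂ) / 6 * (z - (p:ℂ))^3‖
      ≤ C₀ * ‖z - (p:ℂ)‖^4 ∧
    C₀ * ‖z - (p:ℂ)‖^4 ≤ ν^3/6 * ‖z - (p:ℂ)‖^3 := by
  have hγ0 : 0 < γ := by linarith
  have hγ1 : 0 < γ - 1 := by linarith
  have hp1 : 1 < p := by rw [hp, lt_div_iff₀ hγ1]; linarith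
  have hδν : δ < ν^3/(6*C₀) := lt_of_lt_of_le hδ1 (min_le_left _ _)
  have hδp : δ < (p-1)/2 := lt_of_lt_of_le hδ1 (min_le_right _ _)
  have hC₀pos : 0 < C₀ := by
    have h1 : 0 < γ^2 * (p-1)^4 := mul_pos (pow_pos hγ0 2) (pow_pos (by linarith) 4)
    have h2 : 0 < 4/(γ^2 * (p-1)^4) := div_pos (by norm_num) h1
    rw [hC₀]; linarith
  set G : ℂ := (γ : ℂ) with hG
  have hG0 : G ≠ 0 := by
    simp only [hG, ne_eq, Complex.ofReal_eq_zero]; exact ne_of_gt hγ0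
  have hGm1 : G - 1 ≠ 0 := by
    have : ((γ - 1 : ℝ) : ℂ) ≠ 0 := by
      simp only [ne_eq, Complex.ofReal_eq_zero]; exact ne_of_gt hγ1
    simpa using this
  set pc : ℂ := (p : ℂ) with hpcdef
  have hpc : pc = G / (G - 1) := by rw [hpcdef, hp]; push_cast; ring
  set a : ℂ := (((1 - 1/γ)^2 : ℝ) : ℂ) with ha
  set b : ℂ := 1/(γ:ℂ)^2 with hb
  -- region facts
  have hreg : ∀ w : ℂ, ‖w - pc‖ < δ → 1 < w.re ∧ (p-1)/2 < w.re - 1 := by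
    intro w hw
    have h1 : |(w - pc).re| ≤ ‖w - pc‖ := Complex.abs_re_le_norm _
    have h2 : (w - pc).re = w.re - p := by simp [hpcdef]
    rw [h2] at h1
    have := abs_lt.1 (lt_of_le_of_lt h1 hw)
    exact ⟨by linarith [this.1, this.2], by linarith [this.1, this.2]⟩
  have hne : ∀ w : ℂ, ‖w - pc‖ < δ → w ≠ 0 ∧ w - 1 ≠ 0 := by
    intro w hw
    obtain ⟨h1, h2⟩ := hreg w hw
    constructor
    · intro h; rw [h] at h1; simp at h1; linarith
    · intro h
      have h3 : (w - 1).re = 0 := by rw [h]; simp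
      simp [Complex.sub_re] at h3
      linarith
  set U : Set ℂ := {w : ℂ | 1 < w.re} with hU
  have hUopen : IsOpen U := isOpen_lt continuous_const Complex.continuous_re
  have hpcU : pc ∈ U := by
    simp only [hU, mem_setOf_eq, hpcdef, Complex.ofReal_re]; exact hp1
  have hUslit : ∀ w ∈ U, w ∈ Complex.slitPlane ∧ (w - 1) ∈ Complex.slitPlane := by
    intro w hw
    simp only [hU, mem_setOf_eq] at hw
    constructor
    · exact Complex.mem_slitPlane_iff.2 (Or.inl (by linarith))
    · refine Complex.mem_slitPlane_iff.2 (Or.inl ?_)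
      simp only [Complex.sub_re, Complex.one_re]
      linarith
  have hUne : ∀ w ∈ U, w ≠ 0 ∧ w - 1 ≠ 0 := by
    intro w hw
    obtain ⟨h1, h2⟩ := hUslit w hw
    exact ⟨Complex.slitPlane_ne_zero h1, Complex.slitPlane_ne_zero h2⟩
  have hball : ∀ w : ℂ, ‖w - pc‖ < δ → w ∈ U := by
    intro w hw
    simp only [hU, mem_setOf_eq]
    exact (hreg w hw).1
  have hfeq : f = fun z : ℂ => -a * z + Complex.log z - b * Complex.log (z - 1) :=
    funext fun w => hf w
  clear_value G pc a b
  -- derivatives on U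
  have hder1 : ∀ w ∈ U, HasDerivAt f (-a + w⁻¹ - b * (w - 1)⁻¹) w := by
    intro w hw
    obtain ⟨h1, h2⟩ := hUslit w hw
    rw [hfeq]; exact hdF1 a b w h1 h2
  have hd1 : ∀ w ∈ U, deriv f w = -a + w⁻¹ - b * (w - 1)⁻¹ :=
    fun w hw => (hder1 w hw).deriv
  have hd2 : ∀ w ∈ U, deriv (deriv f) w = -(w ^ 2)⁻¹ + b * ((w - 1) ^ 2)⁻¹ := by
    intro w hw
    obtain ⟨h1, h2⟩ := hUne w hw
    have he : deriv f =ᶠ[nhds w] (fun z => -a + z⁻¹ - b * (z - 1)⁻¹) :=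
      Filter.eventually_of_mem (hUopen.mem_nhds hw) hd1
    rw [he.deriv_eq]
    exact (hdF2 a b w h1 h2).deriv
  have hd3 : deriv (deriv (deriv f)) pc = 2 * (pc ^ 3)⁻¹ - 2 * b * ((pc - 1) ^ 3)⁻¹ := by
    obtain ⟨h1, h2⟩ := hUne pc hpcU
    have he : deriv (deriv f) =ᶠ[nhds pc] (fun z => -(z ^ 2)⁻¹ + b * ((z - 1) ^ 2)⁻¹) :=
      Filter.eventually_of_mem (hUopen.mem_nhds hpcU) hd2
    rw [he.deriv_eq]
    exact (hdF3 b pc h1 h2).deriv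
  have hiter : iteratedDeriv 3 f pc = 2 * (pc ^ 3)⁻¹ - 2 * b * ((pc - 1) ^ 3)⁻¹ := by
    rw [show (3:ℕ) = 2 + 1 from rfl, iteratedDeriv_succ,
        show (2:ℕ) = 1 + 1 from rfl, iteratedDeriv_succ, iteratedDeriv_one]
    exact hd3
  -- value computations
  have hν3 : ν^3 = (γ-1)^4/γ^3 := by
    rw [hν, div_pow]
    congr 1
    rw [← Real.rpow_natCast ((γ-1)^((4:ℝ)/3)) 3, ← Real.rpow_mul (le_of_lt hγ1),
        ← Real.rpow_natCast (γ-1) 4]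
    norm_num
  have hF1p : -a + pc⁻¹ - b * (pc - 1)⁻¹ = 0 := by
    rw [hpc, ha, hb]
    push_cast
    rw [← hG]
    field_simp [hG0, hGm1]
    ring
  have hF2p : -(pc ^ 2)⁻¹ + b * ((pc - 1) ^ 2)⁻¹ = 0 := by
    rw [hpc, hb, ← hG]
    field_simp [hG0, hGm1]
    ring
  set c3 : ℂ := iteratedDeriv 3 f pc / 6 with hc3
  clear_value c3
  have hc3' : (6:ℂ) * c3 = 2 * (pc ^ 3)⁻¹ - 2 * b * ((pc - 1) ^ 3)⁻¹ := by
    rw [hc3, hiter]; ring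
  -- |F4| bound
  have hbnorm : ‖b‖ = 1/γ^2 := by
    rw [hb]
    simp [norm_div, norm_pow, Complex.norm_real, abs_of_pos hγ0]
  have hf4bound : ∀ w : ℂ, ‖w - pc‖ < δ →
      ‖-6 * (w ^ 4)⁻¹ + 6 * b * ((w - 1) ^ 4)⁻¹‖ ≤ 24 * C₀ := by
    intro w hw
    obtain ⟨h1, h2⟩ := hreg w hw
    have hw1 : 1 ≤ ‖w‖ := le_trans (le_of_lt h1) (Complex.re_le_norm w)
    have hw2 : (p-1)/2 ≤ ‖w - 1‖ := by
      have h3 : (w - 1).re ≤ ‖w - 1‖ := Complex.re_le_norm _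
      simp only [Complex.sub_re, Complex.one_re] at h3
      linarith
    have hq : (0:ℝ) < (p-1)/2 := by linarith
    have e1 : ‖(-6 : ℂ) * (w ^ 4)⁻¹‖ ≤ 6 := by
      rw [norm_mul, norm_inv, norm_pow]
      have h6 : ‖(-6 : ℂ)‖ = 6 := by norm_num
      rw [h6]
      have h14 : (1:ℝ) ≤ ‖w‖^4 := one_le_pow₀ hw1
      have := inv_le_one_of_one_le₀ h14
      nlinarith
    have e2 : ‖6 * b * ((w - 1) ^ 4)⁻¹‖ ≤ 96 / (γ^2 * (p-1)^4) := by
      rw [norm_mul, norm_mul, norm_inv, norm_pow, hbnorm]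
      have h6 : ‖(6 : ℂ)‖ = 6 := by norm_num
      rw [h6]
      have hple : ((p-1)/2)^4 ≤ ‖w - 1‖^4 := pow_le_pow_left₀ (le_of_lt hq) hw2 4
      have hppos : (0:ℝ) < ((p-1)/2)^4 := pow_pos hq 4
      have hinv : (‖w - 1‖^4)⁻¹ ≤ (((p-1)/2)^4)⁻¹ :=
        inv_anti₀ hppos hple
      have heq : (((p-1)/2)^4)⁻¹ = 16/(p-1)^4 := by
        rw [div_pow]
        rw [inv_div]
        norm_num
      rw [heq] at hinv
      have hb0 : (0:ℝ) ≤ 6 * (1/γ^2) := by positivity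
      calc 6 * (1/γ^2) * (‖w - 1‖^4)⁻¹ ≤ 6 * (1/γ^2) * (16/(p-1)^4) :=
            mul_le_mul_of_nonneg_left hinv hb0
        _ = 96 / (γ^2 * (p-1)^4) := by
            field_simp
            norm_num
    calc ‖-6 * (w ^ 4)⁻¹ + 6 * b * ((w - 1) ^ 4)⁻¹‖
        ≤ ‖(-6 : ℂ) * (w ^ 4)⁻¹‖ + ‖6 * b * ((w - 1) ^ 4)⁻¹‖ := norm_add_le _ _
      _ ≤ 6 + 96 / (γ^2 * (p-1)^4) := add_le_add e1 e2
      _ = 24 * C₀ := by rw [hC₀]; ring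
  -- the chain of bounds
  have hC24 : (0:ℝ) ≤ 24 * C₀ := by linarith
  -- g3
  have hg3d : ∀ w : ℂ, ‖w - pc‖ < δ →
      HasDerivAt (fun v : ℂ => (2 * (v ^ 3)⁻¹ - 2 * b * ((v - 1) ^ 3)⁻¹) - 6 * c3)
        (-6 * (w ^ 4)⁻¹ + 6 * b * ((w - 1) ^ 4)⁻¹) w := by
    intro w hw
    obtain ⟨h1, h2⟩ := hne w hw
    exact (hdF4 b w h1 h2).sub_const _
  have hg3b : ∀ w : ℂ, ‖w - pc‖ < δ →
      ‖-6 * (w ^ 4)⁻¹ + 6 * b * ((w - 1) ^ 4)⁻¹‖ ≤ 24 * C₀ * ‖w - pc‖ ^ 0 := by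
    intro w hw
    simpa using hf4bound w hw
  have hg30 : (2 * (pc ^ 3)⁻¹ - 2 * b * ((pc - 1) ^ 3)⁻¹) - 6 * c3 = 0 := by
    rw [← hc3']; ring
  have hB3 := bound_step 0 hC24 hg3d hg3b hg30
  have hb3 : ∀ w : ℂ, ‖w - pc‖ < δ →
      ‖(2 * (w ^ 3)⁻¹ - 2 * b * ((w - 1) ^ 3)⁻¹) - 6 * c3‖ ≤ 24 * C₀ * ‖w - pc‖ ^ 1 := by
    intro w hw
    have := hB3 w hw
    norm_num at this
    simpa using this
  -- g2
  have hg2d : ∀ w : ℂ, ‖w - pc‖ < δ →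
      HasDerivAt (fun v : ℂ => (-(v ^ 2)⁻¹ + b * ((v - 1) ^ 2)⁻¹) - 6 * c3 * (v - pc))
        ((2 * (w ^ 3)⁻¹ - 2 * b * ((w - 1) ^ 3)⁻¹) - 6 * c3) w := by
    intro w hw
    obtain ⟨h1, h2⟩ := hne w hw
    have := (hdF3 b w h1 h2).fun_sub (((hasDerivAt_id w).sub_const pc).const_mul (6 * c3))
    simpa using this
  have hg20 : (-(pc ^ 2)⁻¹ + b * ((pc - 1) ^ 2)⁻¹) - 6 * c3 * (pc - pc) = 0 := by
    rw [hF2p]; ring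
  have hB2 := bound_step 1 hC24 hg2d hb3 hg20
  have hb2 : ∀ w : ℂ, ‖w - pc‖ < δ →
      ‖(-(w ^ 2)⁻¹ + b * ((w - 1) ^ 2)⁻¹) - 6 * c3 * (w - pc)‖ ≤ 12 * C₀ * ‖w - pc‖ ^ 2 := by
    intro w hw
    have := hB2 w hw
    norm_num at this
    calc _ ≤ 24 * C₀ / 2 * ‖w - pc‖ ^ 2 := this
      _ = 12 * C₀ * ‖w - pc‖ ^ 2 := by ring
  have hC12 : (0:ℝ) ≤ 12 * C₀ := by linarith
  -- g1
  have hg1d : ∀ w : ℂ, ‖w - pc‖ < δ →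
      HasDerivAt (fun v : ℂ => (-a + v⁻¹ - b * (v - 1)⁻¹) - 3 * c3 * (v - pc) ^ 2)
        ((-(w ^ 2)⁻¹ + b * ((w - 1) ^ 2)⁻¹) - 6 * c3 * (w - pc)) w := by
    intro w hw
    obtain ⟨h1, h2⟩ := hne w hw
    have := (hdF2 a b w h1 h2).fun_sub
      ((((hasDerivAt_id w).sub_const pc).fun_pow 2).const_mul (3 * c3))
    refine this.congr_deriv ?_
    simp only [id_eq]
    ring
  have hg10 : (-a + pc⁻¹ - b * (pc - 1)⁻¹) - 3 * c3 * (pc - pc) ^ 2 = 0 := by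
    rw [hF1p]; ring
  have hB1 := bound_step 2 hC12 hg1d hb2 hg10
  have hb1 : ∀ w : ℂ, ‖w - pc‖ < δ →
      ‖(-a + w⁻¹ - b * (w - 1)⁻¹) - 3 * c3 * (w - pc) ^ 2‖ ≤ 4 * C₀ * ‖w - pc‖ ^ 3 := by
    intro w hw
    have := hB1 w hw
    norm_num at this
    calc _ ≤ 12 * C₀ / 3 * ‖w - pc‖ ^ 3 := this
      _ = 4 * C₀ * ‖w - pc‖ ^ 3 := by ring
  have hC4 : (0:ℝ) ≤ 4 * C₀ := by linarith
  -- g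
  have hgd : ∀ w : ℂ, ‖w - pc‖ < δ →
      HasDerivAt (fun v : ℂ => f v - f pc - c3 * (v - pc) ^ 3)
        ((-a + w⁻¹ - b * (w - 1)⁻¹) - 3 * c3 * (w - pc) ^ 2) w := by
    intro w hw
    have := ((hder1 w (hball w hw)).sub_const (f pc)).fun_sub
      ((((hasDerivAt_id w).sub_const pc).fun_pow 3).const_mul c3)
    refine this.congr_deriv ?_
    simp only [id_eq]
    ring
  have hg0 : f pc - f pc - c3 * (pc - pc) ^ 3 = 0 := by ring
  have hB0 := bound_step 3 hC4 hgd hb1 hg0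
  have hzn : ‖z - pc‖ < δ := by
    exact hz
  constructor
  · have := hB0 z hzn
    norm_num at this
    exact this
  · set A : ℝ := ‖z - pc‖ with hA
    have hA0 : 0 ≤ A := norm_nonneg _
    have hAδ : A < δ := hz
    have h6 : A * (6 * C₀) < ν^3 := by
      have := hAδ.trans hδν
      exact (lt_div_iff₀ (by linarith : (0:ℝ) < 6*C₀)).1 this
    have hA3 : 0 ≤ A^3 := pow_nonneg hA0 3
    nlinarith [mul_nonneg hA3 (by linarith : (0:ℝ) ≤ ν^3 - A * (6 * C₀))]
end

section
/- Let γ > 1, p = γ/(γ-1), ν = (γ-1)^{4/3}/γ, and f(z) = -(1-1/γ)² z + log z - (1/γ²) log(z-1). Suppose 0 < δ satisfies δ < min{ν³/(6C₀), (p-1)/2} where C₀ = 1/4 + 4/(γ²(p-1)⁴). Then for 0 < t < δ: Re(f(p + t e^{2πi/3}) - f(p)) ≤ -(ν³/6) t³, and Re(f(p + t e^{iπ/3}) - f(p)) ≥ (ν³/6) t³. -/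
open Complex

lemma logTaylor_four (z : ℂ) : Complex.logTaylor 4 z = z - z^2/2 + z^3/3 := by
  simp [Complex.logTaylor, Finset.sum_range_succ]
  ring

set_option maxHeartbeats 1000000 in
lemma remainder_bound (γ : ℝ) (hγ : 1 < γ)
    (p ν C₀ : ℝ) (hp : p = γ/(γ-1)) (hν : ν = (γ - 1)^((4:ℝ)/3)/γ)
    (hC₀ : C₀ = 1/4 + 4/(γ^2 * (p - 1)^4))
    (f : ℂ → ℂ)
    (hf : ∀ z : ℂ, f z = -((1 - 1/γ)^2 : ℝ) * z + Complex.log z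
        - (1/(γ:ℂ)^2) * Complex.log (z - 1))
    (w : ℂ) (hw : ‖w‖ < (p-1)/2) :
    ‖f ((p:ℂ) + w) - f (p:ℂ) + ((ν^3/3 : ℝ) : ℂ) * w^3‖ ≤ C₀ * ‖w‖^4 := by
  have hγ0 : (0:ℝ) < γ := by linarith
  have hγ1 : (0:ℝ) < γ - 1 := by linarith
  have hpm1 : p - 1 = 1/(γ-1) := by rw [hp]; field_simp; ring
  have hpm1pos : (0:ℝ) < p - 1 := by rw [hpm1]; positivity
  have hp1 : (1:ℝ) < p := by linarith
  have hp0 : (0:ℝ) < p := by linarith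
  have hν3 : ν^3 = (γ-1)^4/γ^3 := by
    rw [hν, div_pow]
    congr 1
    rw [← Real.rpow_natCast ((γ-1)^((4:ℝ)/3)) 3, ← Real.rpow_mul hγ1.le,
      ← Real.rpow_natCast (γ-1) 4]
    norm_num
  have hg0 : (γ:ℂ) ≠ 0 := by exact_mod_cast hγ0.ne'
  have hg1 : (γ:ℂ) - 1 ≠ 0 := by
    have : ((γ - 1 : ℝ) : ℂ) ≠ 0 := by exact_mod_cast hγ1.ne'
    simpa using this
  have hpc : (p:ℂ) = (γ:ℂ)/((γ:ℂ)-1) := by rw [hp]; push_cast; ring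
  have hpm1c : ((p - 1 : ℝ):ℂ) = 1/((γ:ℂ)-1) := by rw [hpm1]; push_cast; ring
  set u : ℂ := w / (p:ℂ) with hu
  set v : ℂ := w / ((p - 1:ℝ):ℂ) with hv
  have hnu : ‖u‖ = ‖w‖ / p := by
    rw [hu, norm_div, Complex.norm_real, Real.norm_of_nonneg hp0.le]
  have hnv : ‖v‖ = ‖w‖ / (p-1) := by
    rw [hv, norm_div, Complex.norm_real, Real.norm_of_nonneg hpm1pos.le]
  have hw0 : (0:ℝ) ≤ ‖w‖ := norm_nonneg w
  have hnu2 : ‖u‖ ≤ (p-1)/(2*p) := by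
    rw [hnu]; rw [div_le_div_iff₀ hp0 (by positivity)]; nlinarith
  have hnu1 : ‖u‖ < 1 := by
    have : (p-1)/(2*p) < 1 := by rw [div_lt_one (by positivity)]; linarith
    linarith
  have hnv2 : ‖v‖ < 1/2 := by
    rw [hnv]; rw [div_lt_div_iff₀ hpm1pos (by norm_num)]; linarith
  have hnv1 : ‖v‖ < 1 := by linarith
  have h1u : (1 + u) ≠ 0 := by
    intro h
    have : ‖u‖ = 1 := by
      have : u = -1 := by linear_combination h
      simp [this]
    linarith
  have h1v : (1 + v) ≠ 0 := by
    intro h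
    have : ‖v‖ = 1 := by
      have : v = -1 := by linear_combination h
      simp [this]
    linarith
  have hsplit1 : Complex.log ((p:ℂ) + w) = (Real.log p : ℂ) + Complex.log (1 + u) := by
    have h1 : (p:ℂ) + w = (p:ℝ) * (1 + u) := by
      rw [hu]
      have : ((p:ℝ):ℂ) ≠ 0 := by exact_mod_cast hp0.ne'
      field_simp
    rw [h1, Complex.log_ofReal_mul hp0 h1u]
  have hsplit2 : Complex.log ((p:ℂ) + w - 1) = (Real.log (p-1) : ℂ) + Complex.log (1 + v) := by
    have h1 : (p:ℂ) + w - 1 = ((p - 1:ℝ):ℂ) * (1 + v) := by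
      have hne : ((p-1:ℝ):ℂ) ≠ 0 := by exact_mod_cast hpm1pos.ne'
      rw [hv, mul_add, mul_one, mul_div_cancel₀ _ hne]
      push_cast
      ring
    rw [h1, Complex.log_ofReal_mul hpm1pos h1v]
  have hlogp : Complex.log (p:ℂ) = (Real.log p : ℂ) := (Complex.ofReal_log hp0.le).symm
  have hlogpm1 : Complex.log ((p:ℂ) - 1) = (Real.log (p-1) : ℂ) := by
    have : ((p:ℂ) - 1) = ((p - 1 : ℝ):ℂ) := by push_cast; ring
    rw [this, (Complex.ofReal_log hpm1pos.le).symm]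
  set E₁ : ℂ := Complex.log (1 + u) - Complex.logTaylor 4 u with hE1
  set E₂ : ℂ := Complex.log (1 + v) - Complex.logTaylor 4 v with hE2
  have hν3c : ((ν:ℂ))^3 * ((γ:ℂ))^3 = ((γ:ℂ)-1)^4 := by
    have hr : ν^3*γ^3 = (γ-1)^4 := by rw [hν3]; field_simp
    exact_mod_cast hr
  have hkey : f ((p:ℂ) + w) - f (p:ℂ) + ((ν^3/3 : ℝ) : ℂ) * w^3
      = E₁ - (1/(γ:ℂ)^2) * E₂ := by
    rw [hE1, hE2, hf, hf, hsplit1, hsplit2, hlogp, hlogpm1, logTaylor_four,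
      logTaylor_four]
    generalize Complex.log (1 + u) = A
    generalize Complex.log (1 + v) = B
    rw [hu, hv, hpm1c, hpc]
    push_cast
    have hι : (γ:ℂ) * ((γ:ℂ))⁻¹ = 1 := mul_inv_cancel₀ hg0
    have h1 : (1:ℂ) - 1/(γ:ℂ) = ((γ:ℂ) - 1) * ((γ:ℂ))⁻¹ := by field_simp
    have e1 : w / ((γ:ℂ)/((γ:ℂ)-1)) = w*((γ:ℂ)-1)/(γ:ℂ) := by
      rw [div_div_eq_mul_div, mul_comm]
    have e2 : w / (1/((γ:ℂ)-1)) = w*((γ:ℂ)-1) := by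
      rw [div_div_eq_mul_div, div_one, mul_comm]
    rw [e1, e2, h1]
    linear_combination
      ((-1/3 : ℂ)*w^3*(ν:ℂ)^3 + ((γ:ℂ))⁻¹*w - (1/3 : ℂ)*((γ:ℂ))⁻¹^2*w^3
        - (γ:ℂ)*((γ:ℂ))⁻¹*w - (1/3 : ℂ)*(γ:ℂ)*((γ:ℂ))⁻¹*w^3*(ν:ℂ)^3
        + (γ:ℂ)*((γ:ℂ))⁻¹^2*w^3 - (γ:ℂ)^2*((γ:ℂ))⁻¹^2*w^3
        - (1/3 : ℂ)*(γ:ℂ)^2*((γ:ℂ))⁻¹^2*w^3*(ν:ℂ)^3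
        + (1/3 : ℂ)*(γ:ℂ)^3*((γ:ℂ))⁻¹^2*w^3) * hι
      + ((1/3 : ℂ)*((γ:ℂ))⁻¹^3*w^3) * hν3c
  rw [hkey]
  have hb1 : ‖E₁‖ ≤ ‖u‖^4 * (1 - ‖u‖)⁻¹ / 4 := by
    have := Complex.norm_log_sub_logTaylor_le 3 hnu1
    norm_num at this ⊢
    exact this
  have hb2 : ‖E₂‖ ≤ ‖v‖^4 * (1 - ‖v‖)⁻¹ / 4 := by
    have := Complex.norm_log_sub_logTaylor_le 3 hnv1
    norm_num at this ⊢
    exact this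
  have hng : ‖1/((γ:ℂ))^2‖ = 1/γ^2 := by
    simp [norm_div, Complex.norm_real, abs_of_pos hγ0]
  have htri : ‖E₁ - (1/(γ:ℂ)^2) * E₂‖ ≤ ‖E₁‖ + (1/γ^2) * ‖E₂‖ := by
    calc ‖E₁ - (1/(γ:ℂ)^2) * E₂‖ ≤ ‖E₁‖ + ‖(1/(γ:ℂ)^2) * E₂‖ := norm_sub_le _ _
    _ = ‖E₁‖ + (1/γ^2) * ‖E₂‖ := by rw [norm_mul, hng]
  have hinv1 : (1 - ‖u‖)⁻¹ ≤ 2*p/(p+1) := by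
    have h1 : (p+1)/(2*p) ≤ 1 - ‖u‖ := by
      have h2 : (p+1)/(2*p) = 1 - (p-1)/(2*p) := by field_simp; ring
      rw [h2]
      linarith [hnu2]
    have h2 : (0:ℝ) < (p+1)/(2*p) := by positivity
    calc (1 - ‖u‖)⁻¹ ≤ ((p+1)/(2*p))⁻¹ := by
          apply inv_anti₀ h2 h1
      _ = 2*p/(p+1) := by rw [inv_div]
  have ht1 : ‖E₁‖ ≤ (1/4) * ‖w‖^4 := by
    have h1 : ‖u‖^4 * (1 - ‖u‖)⁻¹ / 4 ≤ (‖w‖/p)^4 * (2*p/(p+1)) / 4 := by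
      apply div_le_div_of_nonneg_right ?_ (by norm_num)
      apply mul_le_mul
      · rw [hnu]
      · exact hinv1
      · exact inv_nonneg.mpr (by linarith)
      · positivity
    have h4 : p ≤ p^4 := by
      calc p = p^1 := (pow_one p).symm
        _ ≤ p^4 := pow_le_pow_right₀ hp1.le (by norm_num)
    have h5 : p ≤ p^5 := by
      calc p = p^1 := (pow_one p).symm
        _ ≤ p^5 := pow_le_pow_right₀ hp1.le (by norm_num)
    have h6 : 2*p ≤ p^4*(p+1) := by nlinarith [h4, h5]
    have h2 : (‖w‖/p)^4 * (2*p/(p+1)) / 4 ≤ (1/4) * ‖w‖^4 := by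
      have e : (‖w‖/p)^4 * (2*p/(p+1)) = ‖w‖^4*(2*p)/(p^4*(p+1)) := by
        rw [div_pow, div_mul_div_comm]
      rw [e]
      have h7 : ‖w‖^4*(2*p)/(p^4*(p+1)) ≤ ‖w‖^4 := by
        rw [div_le_iff₀ (by positivity)]
        nlinarith [mul_le_mul_of_nonneg_left h6 (pow_nonneg hw0 4)]
      linarith
    linarith
  have hinv2 : (1 - ‖v‖)⁻¹ ≤ 2 := by
    have h1 : (1:ℝ)/2 ≤ 1 - ‖v‖ := by linarith
    calc (1 - ‖v‖)⁻¹ ≤ ((1:ℝ)/2)⁻¹ := inv_anti₀ (by norm_num) h1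
      _ = 2 := by norm_num
  have ht2 : (1/γ^2) * ‖E₂‖ ≤ 4/(γ^2 * (p - 1)^4) * ‖w‖^4 := by
    have h1 : ‖E₂‖ ≤ (‖w‖/(p-1))^4 * 2 / 4 := by
      have hh : ‖v‖^4 * (1 - ‖v‖)⁻¹ / 4 ≤ (‖w‖/(p-1))^4 * 2 / 4 := by
        apply div_le_div_of_nonneg_right ?_ (by norm_num)
        apply mul_le_mul
        · rw [hnv]
        · exact hinv2
        · exact inv_nonneg.mpr (by linarith)
        · positivity
      linarith
    have ha : (0:ℝ) ≤ ‖w‖^4/(γ^2*(p-1)^4) := by positivity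
    have h2 : (1/γ^2) * ((‖w‖/(p-1))^4 * 2 / 4) ≤ 4/(γ^2 * (p - 1)^4) * ‖w‖^4 := by
      calc (1/γ^2) * ((‖w‖/(p-1))^4 * 2 / 4) = ‖w‖^4/(γ^2*(p-1)^4)/2 := by
            rw [div_pow]; field_simp; ring
        _ ≤ 4 * (‖w‖^4/(γ^2*(p-1)^4)) := by linarith
        _ = 4/(γ^2 * (p - 1)^4) * ‖w‖^4 := by ring
    calc (1/γ^2) * ‖E₂‖ ≤ (1/γ^2) * ((‖w‖/(p-1))^4 * 2 / 4) := by
          apply mul_le_mul_of_nonneg_left h1 (by positivity)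
      _ ≤ 4/(γ^2 * (p - 1)^4) * ‖w‖^4 := h2
  calc ‖E₁ - (1/(γ:ℂ)^2) * E₂‖ ≤ ‖E₁‖ + (1/γ^2) * ‖E₂‖ := htri
    _ ≤ (1/4) * ‖w‖^4 + 4/(γ^2 * (p - 1)^4) * ‖w‖^4 := by linarith
    _ = C₀ * ‖w‖^4 := by rw [hC₀]; ring


theorem re_f_cubic_estimates (γ : ℝ) (hγ : 1 < γ)
    (p ν C₀ : ℝ) (hp : p = γ/(γ-1)) (hν : ν = (γ - 1)^((4:ℝ)/3)/γ)
    (hC₀ : C₀ = 1/4 + 4/(γ^2 * (p - 1)^4))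
    (f : ℂ → ℂ)
    (hf : ∀ z : ℂ, f z = -((1 - 1/γ)^2 : ℝ) * z + Complex.log z
        - (1/(γ:ℂ)^2) * Complex.log (z - 1))
    (δ : ℝ) (hδ0 : 0 < δ) (hδ1 : δ < min (ν^3/(6*C₀)) ((p - 1)/2))
    (t : ℝ) (ht0 : 0 < t) (ht1 : t < δ) :
    (f ((p:ℂ) + (t:ℂ) * Complex.exp (2 * Real.pi * Complex.I / 3))
        - f (p:ℂ)).re ≤ -(ν^3/6) * t^3 ∧
    (ν^3/6) * t^3 ≤
      (f ((p:ℂ) + (t:ℂ) * Complex.exp (Real.pi * Complex.I / 3))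
        - f (p:ℂ)).re := by
  have hγ0 : (0:ℝ) < γ := by linarith
  have hγ1 : (0:ℝ) < γ - 1 := by linarith
  have hpm1 : p - 1 = 1/(γ-1) := by rw [hp]; field_simp; ring
  have hpm1pos : (0:ℝ) < p - 1 := by rw [hpm1]; positivity
  have hC₀pos : 0 < C₀ := by rw [hC₀]; positivity
  have hδa : δ < ν^3/(6*C₀) := lt_of_lt_of_le hδ1 (min_le_left _ _)
  have hδb : δ < (p-1)/2 := lt_of_lt_of_le hδ1 (min_le_right _ _)
  have hCδ : C₀ * δ < ν^3/6 := by
    rw [lt_div_iff₀ (by positivity : (0:ℝ) < 6*C₀)] at hδa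
    nlinarith
  -- norm of the remainder for any w of norm t
  have main : ∀ w : ℂ, ‖w‖ = t →
      ‖f ((p:ℂ) + w) - f (p:ℂ) + ((ν^3/3 : ℝ) : ℂ) * w^3‖ ≤ ν^3/6 * t^3 := by
    intro w hwt
    have hw : ‖w‖ < (p-1)/2 := by rw [hwt]; linarith
    have h1 := remainder_bound γ hγ p ν C₀ hp hν hC₀ f hf w hw
    rw [hwt] at h1
    have h2 : C₀ * t^4 ≤ ν^3/6 * t^3 := by
      have : C₀ * t ≤ C₀ * δ := by nlinarith
      nlinarith [pow_pos ht0 3]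
    linarith
  have habs : ∀ z : ℂ, |z.re| ≤ ‖z‖ := fun z => Complex.abs_re_le_norm z
  constructor
  · -- first case : ω = exp(2πi/3), ω³ = 1
    set w : ℂ := (t:ℂ) * Complex.exp (2 * Real.pi * Complex.I / 3) with hwdef
    have hwt : ‖w‖ = t := by
      rw [hwdef, norm_mul, Complex.norm_exp]
      have : (2 * ↑Real.pi * Complex.I / 3).re = 0 := by simp
      rw [this, Real.exp_zero, mul_one, Complex.norm_real, Real.norm_eq_abs, abs_of_pos ht0]
    have hcube : w^3 = ((t^3 : ℝ) : ℂ) := by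
      rw [hwdef, mul_pow, ← Complex.exp_nat_mul]
      rw [show ((3:ℕ):ℂ) * (2 * ↑Real.pi * Complex.I / 3) = 2 * ↑Real.pi * Complex.I by
        push_cast; ring]
      rw [Complex.exp_two_pi_mul_I, mul_one]
      push_cast; ring
    have hR := main w hwt
    set R : ℂ := f ((p:ℂ) + w) - f (p:ℂ) + ((ν^3/3 : ℝ) : ℂ) * w^3 with hRdef
    have hF : f ((p:ℂ) + w) - f (p:ℂ) = R - ((ν^3/3 * t^3 : ℝ) : ℂ) := by
      rw [hRdef, hcube]; push_cast; ring
    rw [hF]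
    have : (R - ((ν^3/3 * t^3 : ℝ) : ℂ)).re = R.re - ν^3/3 * t^3 := by
      rw [Complex.sub_re, Complex.ofReal_re]
    rw [this]
    have h3 : R.re ≤ ν^3/6 * t^3 := le_trans (le_abs_self _) (le_trans (habs R) hR)
    linarith
  · -- second case : ω = exp(πi/3), ω³ = -1
    set w : ℂ := (t:ℂ) * Complex.exp (Real.pi * Complex.I / 3) with hwdef
    have hwt : ‖w‖ = t := by
      rw [hwdef, norm_mul, Complex.norm_exp]
      have : ((Real.pi : ℂ) * Complex.I / 3).re = 0 := by simp
      rw [this, Real.exp_zero, mul_one, Complex.norm_real, Real.norm_eq_abs, abs_of_pos ht0]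
    have hcube : w^3 = -((t^3 : ℝ) : ℂ) := by
      rw [hwdef, mul_pow, ← Complex.exp_nat_mul]
      rw [show ((3:ℕ):ℂ) * ((Real.pi : ℂ) * Complex.I / 3) = (Real.pi : ℂ) * Complex.I by
        push_cast; ring]
      rw [Complex.exp_pi_mul_I]
      push_cast; ring
    have hR := main w hwt
    set R : ℂ := f ((p:ℂ) + w) - f (p:ℂ) + ((ν^3/3 : ℝ) : ℂ) * w^3 with hRdef
    have hF : f ((p:ℂ) + w) - f (p:ℂ) = R + ((ν^3/3 * t^3 : ℝ) : ℂ) := by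
      rw [hRdef, hcube]; push_cast; ring
    rw [hF]
    have : (R + ((ν^3/3 * t^3 : ℝ) : ℂ)).re = R.re + ν^3/3 * t^3 := by
      rw [Complex.add_re, Complex.ofReal_re]
    rw [this]
    have h3 : -(ν^3/6 * t^3) ≤ R.re := by
      linarith [neg_abs_le R.re, le_trans (habs R) hR]
    linarith
end
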